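/- Let p ≥ 1 be an integer, x_0 ∈ s, let a_j > 0 for j ≥ 1 with A_k = Σ_{j=1}^{k} a_j (A_0 = 0), let T_0, T_1, … ∈ s, and define the estimating functions Ψ_k(x) = d_{p+1}(x − x_0) + Σ_{j=1}^{k} a_j·[ f(T_{j−1}) + ⟨∇f(T_{j−1}), x − T_{j−1}⟩ + ψ(x) ]. Let v_k be a minimizer of Ψ_k over s. Then for every k ≥ 0 and every x ∈ s: A_k·F(x) + d_{p+1}(x − x_0) ≥ Ψ_k(x) ≥ Ψ_k(v_k) + (1/(p+1))·(1/2)^{p−1}·‖x − v_k‖^{p+1}. -/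

import Mathlib

open Set Filter Topology
open scoped RealInnerProductSpace


lemma lemD (m : ℕ) (u : ℝ) (h0 : 0 ≤ u) (h1 : u ≤ 1) :
    u ^ (m + 2) + (m + 2) * u ^ (m + 1) * (1 - u) + (1 - u) ^ 2 ≤ 1 := by
  induction m with
  | zero => push_cast; nlinarith
  | succ n ih =>
    have hu : u ^ (n + 2) ≤ u := by
      calc u ^ (n + 2) ≤ u ^ 1 := pow_le_pow_of_le_one h0 h1 (by omega)
      _ = u := pow_one u
    -- G(q) := u^q + q u^{q-1} (1-u), q = n+2; IH : G(q) ≤ 1 - (1-u)^2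
    have ihG : u ^ (n + 2) + (n + 2) * u ^ (n + 1) * (1 - u) ≤ 1 - (1 - u) ^ 2 := by
      push_cast at ih ⊢; linarith
    have step : u ^ (n + 3) + ((n : ℝ) + 3) * u ^ (n + 2) * (1 - u)
        = u * (u ^ (n + 2) + ((n : ℝ) + 2) * u ^ (n + 1) * (1 - u)) + u ^ (n + 2) * (1 - u) := by
      ring
    have h4 : u ^ (n + 2) * (1 - u) ≤ u * (1 - u) :=
      mul_le_mul_of_nonneg_right hu (by linarith)
    have h5 : u * (u ^ (n + 2) + ((n : ℝ) + 2) * u ^ (n + 1) * (1 - u)) ≤ u * (1 - (1 - u) ^ 2) :=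
      mul_le_mul_of_nonneg_left ihG h0
    have : u ^ (n + 3) + ((n : ℝ) + 3) * u ^ (n + 2) * (1 - u) ≤ u * (1 - (1-u)^2) + u * (1 - u) := by
      rw [step]; linarith
    push_cast
    nlinarith [this, mul_nonneg h0 (mul_nonneg h0 (sub_nonneg.2 h1))]

lemma lemC (m : ℕ) (t : ℝ) (h0 : 0 ≤ t) (h1 : t ≤ 1) :
    1 - (m + 2) * t + t ^ 2 ≤ (1 - t) ^ (m + 2) := by
  induction m with
  | zero => push_cast; nlinarith
  | succ n ih =>
    have h2 : (1 - t) ^ (n + 3) = (1 - t) * (1 - t) ^ (n + 2) := by ring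
    push_cast at ih ⊢
    nlinarith [mul_le_mul_of_nonneg_left ih (sub_nonneg.2 h1), sq_nonneg t,
      mul_nonneg (mul_nonneg h0 h0) h0]


lemma midpow (m : ℕ) (a : ℝ) (ha : 0 ≤ a) :
    (1 + a) ^ (m + 1) ≤ 2 ^ m * (1 + a ^ (m + 1)) := by
  have c := (convexOn_pow (𝕜 := ℝ) (m + 1)).2 (mem_Ici.2 (zero_le_one)) (mem_Ici.2 ha)
    (by norm_num : (0:ℝ) ≤ 1/2) (by norm_num : (0:ℝ) ≤ 1/2) (by norm_num)
  simp only [smul_eq_mul] at c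
  have h2 : ((1:ℝ)/2 * 1 + 1/2 * a) = (1 + a)/2 := by ring
  rw [h2] at c
  have h3 : ((1 + a)/2) ^ (m + 1) = (1 + a)^(m+1) / 2^(m+1) := by
    rw [div_pow]
  rw [h3] at c
  have h4 : (0:ℝ) < 2 ^ (m+1) := by positivity
  rw [div_le_iff₀ h4] at c
  calc (1 + a) ^ (m + 1) ≤ (1/2 * 1 ^ (m + 1) + 1/2 * a ^ (m + 1)) * 2 ^ (m + 1) := c
    _ = 2 ^ m * (1 + a ^ (m + 1)) := by rw [pow_succ]; ring

lemma lemPhi (m : ℕ) (a : ℝ) (ha : 0 ≤ a) :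
    (1/2 : ℝ) ^ m * (1 + a) ^ (m + 2) ≤ a ^ (m + 2) + (m + 2) * a + (m + 1) := by
  set F : ℝ → ℝ := fun x => x ^ (m + 2) + (m + 2) * x + (m + 1) - (1/2 : ℝ) ^ m * (1 + x) ^ (m + 2)
    with hF
  have hder : ∀ x : ℝ, HasDerivAt F
      ((m + 2) * x ^ (m + 1) + (m + 2) - (1/2 : ℝ)^m * ((m + 2) * (1 + x) ^ (m + 1))) x := by
    intro x
    have h1 : HasDerivAt (fun x : ℝ => x ^ (m + 2)) ((m + 2) * x ^ (m + 1)) x := by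
      simpa using hasDerivAt_pow (m + 2) x
    have h2 : HasDerivAt (fun x : ℝ => (1 + x) ^ (m + 2)) ((m + 2) * (1 + x) ^ (m + 1)) x := by
      have := (hasDerivAt_pow (m + 2) (1 + x)).comp x ((hasDerivAt_id x).const_add 1)
      simpa [Function.comp_def] using this
    simpa [hF, add_assoc, Pi.add_def, Pi.sub_def] using ((h1.add (((hasDerivAt_id x).const_mul ((m:ℝ) + 2)).add_const ((m:ℝ)+1))).sub
      (h2.const_mul ((1/2:ℝ)^m)))
  have hmono : MonotoneOn F (Ici 0) := by
    apply monotoneOn_of_deriv_nonneg (convex_Ici 0)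
      (fun x _ => (hder x).continuousAt.continuousWithinAt)
      (fun x _ => (hder x).differentiableAt.differentiableWithinAt)
    intro x hx
    rw [interior_Ici] at hx
    rw [(hder x).deriv]
    have hx0 : (0:ℝ) ≤ x := le_of_lt hx
    have key := midpow m x hx0
    have h5 : (1/2:ℝ)^m * (1 + x)^(m+1) ≤ 1 + x^(m+1) := by
      have h6 : (0:ℝ) < 2^m := by positivity
      have : (1/2:ℝ)^m = (2^m)⁻¹ := by rw [one_div, inv_pow]
      rw [this, inv_mul_le_iff₀ h6]
      linarith [key]
    nlinarith [h5]
  have h0 : F 0 ≤ F a := hmono (mem_Ici.2 le_rfl) (mem_Ici.2 ha) ha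
  simp only [hF] at h0
  norm_num at h0
  have hhalf : (1/2:ℝ)^m ≤ 1 := pow_le_one₀ (by norm_num) (by norm_num)
  have hm : (0:ℝ) ≤ m := Nat.cast_nonneg m
  linarith


lemma lemN1 (m : ℕ) (b x : ℝ) (hb : 0 ≤ b) :
    b ^ (m + 2) + (m + 2) * b ^ (m + 1) * (x - b) + (1/2 : ℝ) ^ m * |x - b| ^ (m + 2)
      ≤ |x| ^ (m + 2) := by
  rcases le_or_gt b x with hbx | hxb
  · -- b ≤ x, x ≥ 0
    have hx0 : 0 ≤ x := le_trans hb hbx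
    rw [abs_of_nonneg hx0, abs_of_nonneg (by linarith : (0:ℝ) ≤ x - b)]
    rcases eq_or_lt_of_le hx0 with hxe | hx
    · have hb0 : b = 0 := le_antisymm (hxe ▸ hbx) hb
      simp [← hxe, hb0, zero_pow (by omega : m + 2 ≠ 0)]
    · have hd := lemD m (b/x) (div_nonneg hb hx.le) ((div_le_one hx).2 hbx)
      have h2 := mul_le_mul_of_nonneg_right hd (by positivity : (0:ℝ) ≤ x ^ (m+2))
      have e1 : ((b/x) ^ (m+2) + ((m:ℝ)+2) * (b/x)^(m+1) * (1 - b/x) + (1 - b/x)^2) * x^(m+2)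
          = b^(m+2) + ((m:ℝ)+2) * b^(m+1) * (x - b) + (x-b)^2 * x^m := by
        rw [div_pow, div_pow]
        field_simp
        ring
      rw [e1, one_mul] at h2
      push_cast
      have h3 : ((x-b)/2)^m ≤ x^m := pow_le_pow_left₀ (by linarith) (by linarith) m
      have h4 : (1/2:ℝ)^m * (x-b)^(m+2) ≤ (x-b)^2 * x^m := by
        have e2 : (1/2:ℝ)^m * (x-b)^(m+2) = (x-b)^2 * ((x-b)/2)^m := by
          rw [div_pow, div_pow]; ring
        rw [e2]
        exact mul_le_mul_of_nonneg_left h3 (by positivity)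
      linarith
  · rcases le_or_gt 0 x with hx0 | hxneg
    · -- 0 ≤ x < b
      have hbpos : 0 < b := lt_of_le_of_lt hx0 hxb
      rw [abs_of_nonneg hx0, abs_of_nonpos (by linarith : x - b ≤ 0)]
      have ht0 : 0 ≤ (b - x)/b := div_nonneg (by linarith) hb
      have ht1 : (b - x)/b ≤ 1 := (div_le_one hbpos).2 (by linarith)
      have hc := lemC m ((b-x)/b) ht0 ht1
      have h2 := mul_le_mul_of_nonneg_right hc (by positivity : (0:ℝ) ≤ b ^ (m+2))
      have e1 : (1 - ((m:ℝ)+2) * ((b-x)/b) + ((b-x)/b)^2) * b^(m+2)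
          = b^(m+2) + ((m:ℝ)+2) * b^(m+1) * (x - b) + (b-x)^2 * b^m := by
        field_simp
        ring
      have e0 : (1 - (b-x)/b) ^ (m+2) * b^(m+2) = x^(m+2) := by
        rw [← mul_pow]
        congr 1
        field_simp
        ring
      rw [e1, e0] at h2
      push_cast
      have h3 : ((b-x)/2)^m ≤ b^m := pow_le_pow_left₀ (by linarith) (by linarith) m
      have h4 : (1/2:ℝ)^m * (-(x-b))^(m+2) ≤ (b-x)^2 * b^m := by
        have e2 : (1/2:ℝ)^m * (-(x-b))^(m+2) = (b-x)^2 * ((b-x)/2)^m := by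
          rw [div_pow, div_pow]; ring
        rw [e2]
        exact mul_le_mul_of_nonneg_left h3 (by positivity)
      linarith
    · -- x < 0
      set a := -x with hax
      have ha : 0 < a := by simp [hax]; linarith
      rw [abs_of_neg hxneg, abs_of_nonpos (by linarith : x - b ≤ 0)]
      rcases eq_or_lt_of_le hb with hb0 | hbpos
      · have h1 : (1/2:ℝ)^m ≤ 1 := pow_le_one₀ (by norm_num) (by norm_num)
        have h2 : (0:ℝ) ≤ a^(m+2) := by positivity
        rw [← hb0]
        simp only [zero_pow (by omega : m + 2 ≠ 0), zero_pow (by omega : m + 1 ≠ 0),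
          mul_zero, zero_mul, zero_add, sub_zero, add_zero]
        have e4 : (-x) ^ (m+2) = a^(m+2) := by rw [hax]
        rw [e4]
        nlinarith [h1, h2]
      · have hp := lemPhi m (a/b) (div_nonneg ha.le hb)
        have h2 := mul_le_mul_of_nonneg_right hp (by positivity : (0:ℝ) ≤ b ^ (m+2))
        have e1 : (1/2:ℝ)^m * (1 + a/b)^(m+2) * b^(m+2) = (1/2:ℝ)^m * (a+b)^(m+2) := by
          rw [mul_assoc, ← mul_pow]
          congr 2
          field_simp
          ring
        have e2 : ((a/b)^(m+2) + ((m:ℝ)+2)*(a/b) + ((m:ℝ)+1)) * b^(m+2)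
            = a^(m+2) + ((m:ℝ)+2)*a*b^(m+1) + ((m:ℝ)+1)*b^(m+2) := by
          rw [div_pow]
          field_simp
          ring
        rw [e1, e2] at h2
        push_cast
        have e3 : -(x - b) = a + b := by rw [hax]; ring
        rw [e3]
        have e4 : (-x) ^ (m+2) = a^(m+2) := by rw [hax]
        have e5 : ((m:ℝ)+2) * b^(m+1) * (x - b) = -(((m:ℝ)+2)*a*b^(m+1)) - ((m:ℝ)+2)*b^(m+2) := by
          simp only [hax]; ring
        rw [e4, e5]
        nlinarith [h2]


lemma combine_id (m : ℕ) (a b c X Y D : ℝ) (ha : a ≠ 0) (hb : b ≠ 0) :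
    ((c + a*b)/(2*a*b)) * (b^(m+2) + ((m:ℝ)+2)*b^(m+1)*(a-b) + D*X)
      + (1 - (c + a*b)/(2*a*b)) * (b^(m+2) + ((m:ℝ)+2)*b^(m+1)*(-a-b) + D*Y)
    = b^(m+2) + ((m:ℝ)+2)*(b^m*(c-b^2))
      + D*(((c + a*b)/(2*a*b))*X + (1 - (c + a*b)/(2*a*b))*Y) := by
  have hb2 : b^(m+2) = b^m * b^2 := by ring
  have hb1 : b^(m+1) = b^m * b := by ring
  rw [hb2, hb1]
  generalize b^m = B
  field_simp
  ring

lemma sq_rpow_half (x : ℝ) (q : ℕ) : (x ^ 2 : ℝ) ^ ((q : ℝ)/2) = |x| ^ q := by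
  rw [← sq_abs, ← Real.rpow_natCast |x| 2, ← Real.rpow_mul (abs_nonneg x),
    show ((2:ℕ):ℝ) * ((q:ℝ)/2) = (q:ℝ) by push_cast; ring, Real.rpow_natCast]

lemma lemL5 {E : Type*} [NormedAddCommGroup E] [InnerProductSpace ℝ E]
    (m : ℕ) (w h : E) :
    ‖w‖ ^ (m + 2) + ((m : ℝ) + 2) * (‖w‖ ^ m * ⟪w, h⟫) + (1/2 : ℝ) ^ m * ‖h‖ ^ (m + 2)
      ≤ ‖w + h‖ ^ (m + 2) := by
  have hhalf : (1/2:ℝ)^m ≤ 1 := pow_le_one₀ (by norm_num) (by norm_num)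
  by_cases hw : w = 0
  · subst hw
    simp only [inner_zero_left, mul_zero, zero_mul, norm_zero, add_zero, zero_add,
      zero_pow (by omega : m + 2 ≠ 0), mul_zero]
    have h1 : (0:ℝ) ≤ ‖h‖^(m+2) := by positivity
    nlinarith
  · by_cases hwh : w + h = 0
    · have hh : h = -w := by
        have : h = -w + (w + h) := by abel
        rw [hwh] at this; simpa using this
      subst hh
      have hi : ⟪w, -w⟫ = -(‖w‖^2) := by
        rw [inner_neg_right, real_inner_self_eq_norm_sq]
      rw [hi, hwh]
      simp only [norm_neg, norm_zero, zero_pow (by omega : m + 2 ≠ 0)]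
      have e2 : ‖w‖^m * ‖w‖^2 = ‖w‖^(m+2) := by ring
      have hm1 : (0:ℝ) ≤ (m:ℝ) := Nat.cast_nonneg m
      have hbq : (0:ℝ) ≤ ‖w‖^(m+2) := by positivity
      nlinarith
    · set b := ‖w‖ with hbdef
      set a := ‖w + h‖ with hadef
      set H := ‖h‖ with hHdef
      have hb : 0 ≤ b := norm_nonneg _
      have hbpos : 0 < b := norm_pos_iff.2 hw
      have hapos : 0 < a := norm_pos_iff.2 hwh
      set c := ⟪w, w + h⟫ with hcdef
      have hinner : ⟪w, h⟫ = c - b^2 := by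
        rw [hcdef, inner_add_right, real_inner_self_eq_norm_sq]; ring
      have hH2 : H^2 = a^2 + b^2 - 2*c := by
        have e : h = (w + h) - w := by abel
        rw [hHdef, e, norm_sub_sq_real, real_inner_comm]
        rw [← hadef, ← hbdef, ← hcdef]; ring
      have hcs : |c| ≤ b * a := abs_real_inner_le_norm w (w + h)
      have hcs1 : -(a*b) ≤ c := by nlinarith [neg_abs_le c]
      have hcs2 : c ≤ a*b := by nlinarith [le_abs_self c]
      set lam := (c + a*b)/(2*a*b) with hlam
      have hab : 0 < a * b := mul_pos hapos hbpos
      have hlam0 : 0 ≤ lam := div_nonneg (by linarith) (by linarith)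
      have hlam1 : lam ≤ 1 := by rw [hlam, div_le_one (by linarith)]; linarith
      have P1 := lemN1 m b a hb
      have P2 := lemN1 m b (-a) hb
      rw [abs_of_pos hapos] at P1
      rw [abs_neg, abs_of_pos hapos, show -a - b = -(a+b) by ring, abs_neg,
        abs_of_nonneg (by linarith : (0:ℝ) ≤ a + b)] at P2
      -- convexity of x ^ (q/2)
      have hq2 : (1:ℝ) ≤ (((m+2:ℕ)):ℝ)/2 := by
        push_cast
        have : (0:ℝ) ≤ (m:ℝ) := Nat.cast_nonneg m
        linarith
      have K := (convexOn_rpow hq2).2 (mem_Ici.2 (sq_nonneg (a-b))) (mem_Ici.2 (sq_nonneg (a+b)))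
        hlam0 (by linarith : 0 ≤ 1 - lam) (by ring)
      simp only [smul_eq_mul] at K
      have e3 : lam * (a-b)^2 + (1-lam) * (a+b)^2 = H^2 := by
        rw [hH2, hlam]; field_simp; ring
      rw [e3, sq_rpow_half (a-b) (m+2), sq_rpow_half (a+b) (m+2), sq_rpow_half H (m+2),
        abs_of_nonneg (by positivity : (0:ℝ) ≤ H),
        abs_of_nonneg (by linarith : (0:ℝ) ≤ a + b)] at K
      set X := |a - b| ^ (m+2) with hX
      set Y := (a + b) ^ (m+2) with hY
      have hP : lam * (b ^ (m + 2) + ((m:ℝ) + 2) * b ^ (m + 1) * (a - b) + (1/2:ℝ) ^ m * X)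
          + (1 - lam) * (b ^ (m + 2) + ((m:ℝ) + 2) * b ^ (m + 1) * (-a - b) + (1/2:ℝ) ^ m * Y)
          ≤ a ^ (m+2) := by
        have t1 := mul_le_mul_of_nonneg_left P1 hlam0
        have t2 := mul_le_mul_of_nonneg_left P2 (by linarith : (0:ℝ) ≤ 1 - lam)
        push_cast at t1 t2
        nlinarith [t1, t2]

      have e4' := combine_id m a b c X Y ((1/2:ℝ)^m) hapos.ne' hbpos.ne'
      rw [← hlam] at e4'
      have e4 : lam * (b ^ (m + 2) + ((m:ℝ) + 2) * b ^ (m + 1) * (a - b) + (1/2:ℝ) ^ m * X)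
          + (1 - lam) * (b ^ (m + 2) + ((m:ℝ) + 2) * b ^ (m + 1) * (-a - b) + (1/2:ℝ) ^ m * Y)
          = b ^ (m+2) + ((m:ℝ) + 2) * (b ^ m * (c - b^2))
            + (1/2:ℝ)^m * (lam * X + (1 - lam) * Y) := by
        convert e4' using 2 <;> ring
      rw [e4] at hP
      rw [hinner]
      have hK2 : (1/2:ℝ)^m * H^(m+2) ≤ (1/2:ℝ)^m * (lam * X + (1 - lam) * Y) :=
        mul_le_mul_of_nonneg_left K (by positivity)
      linarith


lemma grad_ineq {E : Type*} [NormedAddCommGroup E] [InnerProductSpace ℝ E] [CompleteSpace E]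
    (f : E → ℝ) (hfconv : ConvexOn ℝ Set.univ f) (y g : E) (hg : HasGradientAt f g y) (z : E) :
    f y + ⟪g, z - y⟫ ≤ f z := by
  have hL : HasDerivAt (fun t : ℝ => y + t • (z - y)) (z - y) 0 := by
    simpa using ((hasDerivAt_id (0:ℝ)).smul_const (z - y)).const_add y
  have hq : HasDerivAt (fun t : ℝ => f (y + t • (z - y))) ⟪g, z - y⟫ 0 := by
    have h0 : y + (0:ℝ) • (z - y) = y := by simp
    have hfd : HasFDerivAt f ((InnerProductSpace.toDual ℝ E) g) (y + (0:ℝ) • (z - y)) := by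
      rw [h0]; exact hg.hasFDerivAt
    have := hfd.comp_hasDerivAt 0 hL
    simpa [InnerProductSpace.toDual_apply_apply, Function.comp_def] using this
  have hslope := hasDerivAt_iff_tendsto_slope.1 hq
  have hmono : (𝓝[>] (0:ℝ)) ≤ 𝓝[≠] (0:ℝ) :=
    nhdsWithin_mono 0 (fun t ht => Set.mem_compl_singleton_iff.2 (ne_of_gt ht))
  have hev : ∀ᶠ t in 𝓝[>] (0:ℝ),
      slope (fun t : ℝ => f (y + t • (z - y))) 0 t ≤ f z - f y := by
    filter_upwards [Ioc_mem_nhdsGT_of_mem (by constructor <;> norm_num : (0:ℝ) ∈ Ico 0 1)]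
    intro t ht
    obtain ⟨ht0, ht1⟩ := ht
    rw [slope_def_field, sub_zero, div_le_iff₀ ht0]
    have hcomb : f ((1-t) • y + t • z) ≤ (1-t) * f y + t * f z := by
      have := hfconv.2 (Set.mem_univ y) (Set.mem_univ z)
        (by linarith : (0:ℝ) ≤ 1 - t) ht0.le (by ring)
      simpa using this
    have he : y + t • (z - y) = (1-t) • y + t • z := by
      rw [smul_sub, sub_smul, one_smul]; abel
    rw [he, show y + (0:ℝ) • (z - y) = y from by simp]
    nlinarith [hcomb]
  have := le_of_tendsto (hslope.mono_left hmono) hev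
  linarith

lemma normpow_hasDerivAt {E : Type*} [NormedAddCommGroup E] [InnerProductSpace ℝ E]
    (m : ℕ) (w h : E) :
    HasDerivAt (fun t : ℝ => ‖w + t • h‖ ^ (m+2))
      (((m:ℝ)+2) * (‖w‖^m * ⟪w, h⟫)) 0 := by
  set ρ : ℝ → ℝ := fun t => ‖w‖^2 + (2*⟪w,h⟫)*t + ‖h‖^2*t^2 with hρ
  have hρval : ∀ t : ℝ, ρ t = ‖w + t • h‖^2 := by
    intro t
    rw [hρ]
    simp only []
    rw [norm_add_sq_real, real_inner_smul_right, norm_smul]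
    simp [mul_pow, abs_of_nonneg, sq_abs]
    ring
  have hρder : HasDerivAt ρ (2*⟪w,h⟫) 0 := by
    have h1 : HasDerivAt (fun t : ℝ => (2*⟪w,h⟫)*t) (2*⟪w,h⟫) 0 := by
      simpa using (hasDerivAt_id (0:ℝ)).const_mul (2*⟪w,h⟫)
    have h2 : HasDerivAt (fun t : ℝ => ‖h‖^2*t^2) (0:ℝ) 0 := by
      have := (hasDerivAt_pow 2 (0:ℝ)).const_mul (‖h‖^2)
      simpa using this
    simpa [hρ, add_assoc] using ((h1.add h2).const_add (‖w‖^2))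
  have hq2 : (1:ℝ) ≤ (((m+2:ℕ)):ℝ)/2 := by
    push_cast
    have : (0:ℝ) ≤ (m:ℝ) := Nat.cast_nonneg m
    linarith
  have hF : HasDerivAt (fun x : ℝ => x ^ ((((m+2:ℕ)):ℝ)/2))
      (((((m+2:ℕ)):ℝ)/2) * (ρ 0) ^ (((((m+2:ℕ)):ℝ)/2) - 1)) (ρ 0) :=
    Real.hasDerivAt_rpow_const (Or.inr hq2)
  have hcomp := hF.comp 0 hρder
  have hfun : (fun t : ℝ => ‖w + t • h‖ ^ (m+2))
      = (fun x : ℝ => x ^ ((((m+2:ℕ)):ℝ)/2)) ∘ ρ := by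
    funext t
    simp only [Function.comp_apply, hρval t]
    rw [sq_rpow_half, abs_of_nonneg (norm_nonneg _)]
  rw [← hfun] at hcomp
  refine hcomp.congr_deriv ?_
  have hρ0 : ρ 0 = ‖w‖^2 := by rw [hρ]; simp
  rw [hρ0]
  have : ((((m+2:ℕ)):ℝ)/2 - 1) = ((m:ℕ):ℝ)/2 := by push_cast; ring
  rw [this, sq_rpow_half, abs_of_nonneg (norm_nonneg _)]
  push_cast
  ring


theorem stmt6 {E : Type*} [NormedAddCommGroup E] [InnerProductSpace ℝ E]
    [FiniteDimensional ℝ E]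
    (s : Set E) (hs : s.Nonempty) (hsconv : Convex ℝ s)
    (ψ : E → ℝ) (hψ : ConvexOn ℝ s ψ)
    (f : E → ℝ) (f' : E → E) (hf' : ∀ x, HasGradientAt f (f' x) x)
    (hfconv : ConvexOn ℝ Set.univ f)
    (p : ℕ) (hp : 1 ≤ p)
    (x0 : E) (hx0 : x0 ∈ s)
    (a : ℕ → ℝ) (ha : ∀ j : ℕ, 1 ≤ j → 0 < a j)
    (A : ℕ → ℝ) (hA : ∀ k, A k = ∑ j ∈ Finset.Icc 1 k, a j)
    (T : ℕ → E) (hT : ∀ j, T j ∈ s)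
    (Ψ : ℕ → E → ℝ)
    (hΨ : ∀ k z, Ψ k z = ‖z - x0‖ ^ (p + 1) / (p + 1) +
        ∑ j ∈ Finset.Icc 1 k,
          a j * (f (T (j - 1)) + ⟪f' (T (j - 1)), z - T (j - 1)⟫ + ψ z))
    (v : ℕ → E) (hv : ∀ k, v k ∈ s ∧ ∀ z ∈ s, Ψ k (v k) ≤ Ψ k z) :
    ∀ k : ℕ, ∀ x ∈ s,
      A k * (f x + ψ x) + ‖x - x0‖ ^ (p + 1) / (p + 1) ≥ Ψ k x ∧
      Ψ k x ≥ Ψ k (v k) + 1 / (p + 1 : ℝ) * (1 / 2 : ℝ) ^ (p - 1) * ‖x - v k‖ ^ (p + 1) := by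
  haveI : CompleteSpace E := FiniteDimensional.complete ℝ E
  obtain ⟨m, rfl⟩ : ∃ m, p = m + 1 := ⟨p - 1, (Nat.succ_pred_eq_of_pos hp).symm⟩
  intro k x hx
  set Φ : E → ℝ := fun z => ∑ j ∈ Finset.Icc 1 k,
      a j * (f (T (j - 1)) + ⟪f' (T (j - 1)), z - T (j - 1)⟫ + ψ z) with hΦ
  have hMpos : (0:ℝ) < (m:ℝ) + 2 := by positivity
  have hΨ' : ∀ z, Ψ k z = ‖z - x0‖ ^ (m + 2) / ((m:ℝ) + 2) + Φ z := by
    intro z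
    rw [hΨ k z]
    have e : ((m+1 : ℕ) : ℝ) + 1 = (m:ℝ) + 2 := by push_cast; ring
    rw [show m + 1 + 1 = m + 2 from rfl, e, hΦ]
  constructor
  · -- Part 1
    rw [ge_iff_le, hΨ k x, hA k]
    have hgr : ∀ j ∈ Finset.Icc 1 k,
        a j * (f (T (j - 1)) + ⟪f' (T (j - 1)), x - T (j - 1)⟫ + ψ x)
          ≤ a j * (f x + ψ x) := by
      intro j hj
      have hj1 := (Finset.mem_Icc.1 hj).1
      apply mul_le_mul_of_nonneg_left _ (ha j hj1).le
      have := grad_ineq f hfconv (T (j-1)) (f' (T (j-1))) (hf' _) x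
      linarith
    have hsum := Finset.sum_le_sum hgr
    rw [← Finset.sum_mul] at hsum
    linarith
  · -- Part 2
    set vk := v k with hvkdef
    obtain ⟨hvs, hmin⟩ := hv k
    set w := vk - x0 with hwdef
    set hh := x - vk with hhdef
    set G0 := ‖w‖^m * ⟪w, hh⟫ with hG0
    have hφ : ∀ t : ℝ, 0 ≤ t → t ≤ 1 →
        Φ ((1 - t) • vk + t • x) ≤ (1 - t) * Φ vk + t * Φ x := by
      intro t h0 h1
      rw [hΦ]
      simp only []
      rw [Finset.mul_sum, Finset.mul_sum, ← Finset.sum_add_distrib]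
      apply Finset.sum_le_sum
      intro j hj
      have hj1 := (Finset.mem_Icc.1 hj).1
      have haj := (ha j hj1).le
      have hψc : ψ ((1 - t) • vk + t • x) ≤ (1 - t) * ψ vk + t * ψ x := by
        have := hψ.2 hvs hx (by linarith : (0:ℝ) ≤ 1 - t) h0 (by ring)
        simpa using this
      have hinner : ⟪f' (T (j-1)), ((1 - t) • vk + t • x) - T (j-1)⟫
          = (1-t) * ⟪f' (T (j-1)), vk - T (j-1)⟫ + t * ⟪f' (T (j-1)), x - T (j-1)⟫ := by
        have hinl : ((1 - t) • vk + t • x) - T (j-1)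
            = (1 - t) • (vk - T (j-1)) + t • (x - T (j-1)) := by module
        rw [hinl, inner_add_right, real_inner_smul_right, real_inner_smul_right]
      calc a j * (f (T (j-1)) + ⟪f' (T (j-1)), ((1 - t) • vk + t • x) - T (j-1)⟫
              + ψ ((1 - t) • vk + t • x))
          = a j * (f (T (j-1)) + ((1-t) * ⟪f' (T (j-1)), vk - T (j-1)⟫
              + t * ⟪f' (T (j-1)), x - T (j-1)⟫) + ψ ((1 - t) • vk + t • x)) := by
            rw [hinner]
        _ ≤ a j * (f (T (j-1)) + ((1-t) * ⟪f' (T (j-1)), vk - T (j-1)⟫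
              + t * ⟪f' (T (j-1)), x - T (j-1)⟫) + ((1 - t) * ψ vk + t * ψ x)) := by
            apply mul_le_mul_of_nonneg_left _ haj
            linarith
        _ = (1 - t) * (a j * (f (T (j-1)) + ⟪f' (T (j-1)), vk - T (j-1)⟫ + ψ vk))
              + t * (a j * (f (T (j-1)) + ⟪f' (T (j-1)), x - T (j-1)⟫ + ψ x)) := by
            ring
    have hder : HasDerivAt (fun t : ℝ => ‖w + t • hh‖^(m+2) / ((m:ℝ)+2)) G0 0 := by
      have hd := (normpow_hasDerivAt m w hh).div_const ((m:ℝ)+2)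
      refine hd.congr_deriv ?_
      rw [hG0]
      field_simp
    have hslope := (hasDerivAt_iff_tendsto_slope.1 hder).mono_left
      (nhdsWithin_mono 0 (show Ioi (0:ℝ) ⊆ {(0:ℝ)}ᶜ from
        fun t ht => Set.mem_compl_singleton_iff.2 (ne_of_gt ht)))
    have hev : ∀ᶠ t in 𝓝[>] (0:ℝ), -(Φ x - Φ vk)
        ≤ slope (fun t : ℝ => ‖w + t • hh‖^(m+2) / ((m:ℝ)+2)) 0 t := by
      filter_upwards [Ioc_mem_nhdsGT_of_mem (by constructor <;> norm_num : (0:ℝ) ∈ Ico 0 1)]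
      rintro t ⟨ht0, ht1⟩
      rw [slope_def_field, sub_zero, le_div_iff₀ ht0]
      simp only [zero_smul, add_zero]
      have hmem : (1 - t) • vk + t • x ∈ s := hsconv hvs hx (by linarith) ht0.le (by ring)
      have hm2 := hmin _ hmem
      rw [hΨ' vk, hΨ' ((1 - t) • vk + t • x)] at hm2
      rw [show ((1 - t) • vk + t • x) - x0 = w + t • hh from by rw [hwdef, hhdef]; module,
        ← hwdef] at hm2
      have hφt := hφ t ht0.le ht1
      linarith
    have hlim : -(Φ x - Φ vk) ≤ G0 := ge_of_tendsto hslope hev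
    have hL5 := lemL5 m w hh
    rw [← hG0] at hL5
    rw [ge_iff_le, hΨ' x, hΨ' vk,
      show x - x0 = w + hh from by rw [hwdef, hhdef]; module, ← hwdef]
    simp only [Nat.add_sub_cancel, show m + 1 + 1 = m + 2 from rfl]
    push_cast
    have hkey : ‖w‖^(m+2) + ((m:ℝ)+2) * (Φ vk - Φ x) + (1/2:ℝ)^m * ‖hh‖^(m+2)
        ≤ ‖w + hh‖^(m+2) := by
      have h1 : ((m:ℝ)+2) * (Φ vk - Φ x) ≤ ((m:ℝ)+2) * G0 :=
        mul_le_mul_of_nonneg_left (by linarith) hMpos.le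
      linarith
    have hdivy := (div_le_div_iff_of_pos_right hMpos).2 hkey
    have e2 : (‖w‖^(m+2) + ((m:ℝ)+2) * (Φ vk - Φ x) + (1/2:ℝ)^m * ‖hh‖^(m+2)) / ((m:ℝ)+2)
        = ‖w‖^(m+2)/((m:ℝ)+2) + (Φ vk - Φ x) + (1/2:ℝ)^m * ‖hh‖^(m+2)/((m:ℝ)+2) := by
      field_simp
    rw [e2] at hdivy
    have e3 : 1/((m:ℝ)+1+1) * (1/2:ℝ)^m * ‖hh‖^(m+2) = (1/2:ℝ)^m * ‖hh‖^(m+2)/((m:ℝ)+2) := by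
      ring
    linarith [hdivy, e3]
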